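/- For every γ > 0 and all x, y ∈ ℝ, writing a = √γ/2 + (y−x)/√γ, the partial derivative of B_γ in x simplifies to ∂B_γ/∂x (x,y) = e^{−x}Φ(a), and the mixed second partial derivative simplifies to ∂²B_γ/∂x∂y (x,y) = e^{−x}φ(a)/√γ. -/

import Mathlib

open MeasureTheory

/-- Standard normal density. -/
noncomputable def stdNormalPdf (u : ℝ) : ℝ :=
  (Real.sqrt (2 * Real.pi))⁻¹ * Real.exp (-u ^ 2 / 2)

/-- Standard normal distribution function. -/
noncomputable def stdNormalCdf (u : ℝ) : ℝ := ∫ v in Set.Iic u, stdNormalPdf v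

/-- Brown–Resnick bivariate log-distribution with Gumbel margins. -/
noncomputable def brB (γ x y : ℝ) : ℝ :=
  -Real.exp (-x) * stdNormalCdf (Real.sqrt γ / 2 + (y - x) / Real.sqrt γ)
    - Real.exp (-y) * stdNormalCdf (Real.sqrt γ / 2 + (x - y) / Real.sqrt γ)

lemma pdf_cont : Continuous stdNormalPdf := by
  unfold stdNormalPdf; fun_prop

lemma pdf_integrable : Integrable stdNormalPdf := by
  have h : Integrable (fun u : ℝ => Real.exp (-(1/2 : ℝ) * u ^ 2)) :=
    integrable_exp_neg_mul_sq (by norm_num)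
  have := h.const_mul (Real.sqrt (2 * Real.pi))⁻¹
  refine this.congr ?_
  filter_upwards with u
  unfold stdNormalPdf
  ring_nf

lemma cdf_hasDeriv (u : ℝ) : HasDerivAt stdNormalCdf (stdNormalPdf u) u := by
  have hfun : ∀ v : ℝ, stdNormalCdf v =
      stdNormalCdf 0 + ∫ t in (0:ℝ)..v, stdNormalPdf t := by
    intro v
    have := intervalIntegral.integral_Iic_sub_Iic
      (pdf_integrable.integrableOn (s := Set.Iic 0))
      (pdf_integrable.integrableOn (s := Set.Iic v))
    unfold stdNormalCdf
    linarith [this]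
  have h : HasDerivAt (fun v => stdNormalCdf 0 + ∫ t in (0:ℝ)..v, stdNormalPdf t)
      (stdNormalPdf u) u := by
    have h' := intervalIntegral.integral_hasDerivAt_right
      (pdf_cont.intervalIntegrable 0 u)
      (pdf_cont.stronglyMeasurableAtFilter _ _)
      pdf_cont.continuousAt
    simpa using h'.const_add (stdNormalCdf 0)
  exact h.congr_of_eventuallyEq (Filter.Eventually.of_forall fun v => (hfun v))

lemma pdf_symm {c : ℝ} (hc : c ≠ 0) (x y : ℝ) :
    Real.exp (-x) * stdNormalPdf (c / 2 + (y - x) / c)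
      = Real.exp (-y) * stdNormalPdf (c / 2 + (x - y) / c) := by
  unfold stdNormalPdf
  rw [mul_comm (Real.exp (-x)), mul_comm (Real.exp (-y)), mul_assoc, mul_assoc]
  congr 1
  rw [← Real.exp_add, ← Real.exp_add]
  congr 1
  field_simp
  ring

lemma derivX (γ : ℝ) (hγ : 0 < γ) (x y : ℝ) :
    HasDerivAt (fun x' => brB γ x' y)
      (Real.exp (-x) * stdNormalCdf (Real.sqrt γ / 2 + (y - x) / Real.sqrt γ)) x := by
  set c := Real.sqrt γ with hcdef
  have hc : c ≠ 0 := ne_of_gt (Real.sqrt_pos.mpr hγ)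
  have h1 : HasDerivAt (fun x' : ℝ => c / 2 + (y - x') / c) (-1 / c) x := by
    simpa using (((hasDerivAt_id x).const_sub y).div_const c).const_add (c / 2)
  have h2 : HasDerivAt (fun x' => stdNormalCdf (c / 2 + (y - x') / c))
      (stdNormalPdf (c / 2 + (y - x) / c) * (-1 / c)) x :=
    (cdf_hasDeriv _).comp x h1
  have h3 : HasDerivAt (fun x' : ℝ => Real.exp (-x')) (-Real.exp (-x)) x := by
    simpa using (hasDerivAt_neg x).exp
  have h4 : HasDerivAt (fun x' : ℝ => c / 2 + (x' - y) / c) (1 / c) x := by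
    simpa using (((hasDerivAt_id x).sub_const y).div_const c).const_add (c / 2)
  have h5 : HasDerivAt (fun x' => Real.exp (-y) * stdNormalCdf (c / 2 + (x' - y) / c))
      (Real.exp (-y) * (stdNormalPdf (c / 2 + (x - y) / c) * (1 / c))) x :=
    ((cdf_hasDeriv _).comp x h4).const_mul _
  have h6 := ((h3.mul h2).neg.sub h5)
  have alg : ∀ E F P Q Ph : ℝ, E * P = F * Q →
      -((-E) * Ph + E * (P * (-1 / c))) - F * (Q * (1 / c)) = E * Ph := by
    intro E F P Q Ph h
    field_simp
    linarith
  have key := alg (Real.exp (-x)) (Real.exp (-y)) (stdNormalPdf (c / 2 + (y - x) / c))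
    (stdNormalPdf (c / 2 + (x - y) / c)) (stdNormalCdf (c / 2 + (y - x) / c))
    (pdf_symm hc x y)
  rw [key] at h6
  refine h6.congr_of_eventuallyEq (Filter.Eventually.of_forall fun x' => ?_)
  unfold brB
  simp only [Pi.sub_apply, Pi.neg_apply, Pi.mul_apply, hcdef]
  ring

/-- Simplified partial derivatives of `B_γ`: `∂B_γ/∂x = e^{-x} Φ(a)` and
`∂²B_γ/∂x∂y = e^{-x} φ(a)/√γ`, where `a = √γ/2 + (y-x)/√γ`. -/
theorem stmt_11 (γ : ℝ) (hγ : 0 < γ) (x y : ℝ) :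
    HasDerivAt (fun x' => brB γ x' y)
      (Real.exp (-x) * stdNormalCdf (Real.sqrt γ / 2 + (y - x) / Real.sqrt γ)) x
    ∧ HasDerivAt (fun y' => deriv (fun x' => brB γ x' y') x)
        (Real.exp (-x) * stdNormalPdf (Real.sqrt γ / 2 + (y - x) / Real.sqrt γ)
          / Real.sqrt γ) y := by
  set c := Real.sqrt γ with hcdef
  have hc : c ≠ 0 := ne_of_gt (Real.sqrt_pos.mpr hγ)
  refine ⟨derivX γ hγ x y, ?_⟩
  have h1 : HasDerivAt (fun y' : ℝ => c / 2 + (y' - x) / c) (1 / c) y := by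
    simpa using (((hasDerivAt_id y).sub_const x).div_const c).const_add (c / 2)
  have h2 : HasDerivAt (fun y' => Real.exp (-x) * stdNormalCdf (c / 2 + (y' - x) / c))
      (Real.exp (-x) * (stdNormalPdf (c / 2 + (y - x) / c) * (1 / c))) y :=
    ((cdf_hasDeriv _).comp y h1).const_mul _
  have key : Real.exp (-x) * (stdNormalPdf (c / 2 + (y - x) / c) * (1 / c))
      = Real.exp (-x) * stdNormalPdf (c / 2 + (y - x) / c) / c := by ring
  rw [key] at h2
  refine h2.congr_of_eventuallyEq (Filter.Eventually.of_forall fun y' => ?_)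
  show deriv (fun x' => brB γ x' y') x
      = Real.exp (-x) * stdNormalCdf (c / 2 + (y' - x) / c)
  rw [hcdef]
  exact (derivX γ hγ x y').deriv
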